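/- Let f : ℝ^n → ℝ be smooth (continuously differentiable) and let x₀ satisfy ∇f(x₀) ≠ 0. Define Ω = {x : f(x) ≤ f(x₀)}. Then the half-space Q = {x : ⟨∇f(x₀), x − x₀⟩ ≤ 0} is a tent of Ω at x₀: there exists a map r defined in a neighborhood of x₀ with r(x) = x + o(x − x₀) and ε > 0 such that r(x) ∈ Ω for all x ∈ Q with ‖x − x₀‖ < ε. -/

import Mathlib

open Asymptotics

set_option maxHeartbeats 2000000 in
/-- Boltyanskii's Theorem 9: if `∇f(x₀) ≠ 0`, the half-space
`Q = {x : ⟨∇f(x₀), x - x₀⟩ ≤ 0}` is a tent of `Ω = {x : f x ≤ f x₀}` at `x₀`, witnessed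
by a map `r(x) = x + o(x - x₀)` sending points of `Q` near `x₀` into `Ω`. -/
theorem stmt_13 {n : ℕ} (f : EuclideanSpace ℝ (Fin n) → ℝ)
    (hf : ContDiff ℝ 1 f) (x₀ : EuclideanSpace ℝ (Fin n))
    (hgrad : fderiv ℝ f x₀ ≠ 0) :
    ∃ r : EuclideanSpace ℝ (Fin n) → EuclideanSpace ℝ (Fin n),
      ((fun x => r x - x) =o[nhds x₀] fun x => x - x₀) ∧
      ∃ ε > (0 : ℝ), ∀ x, fderiv ℝ f x₀ (x - x₀) ≤ 0 → ‖x - x₀‖ < ε → f (r x) ≤ f x₀ := by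
  classical
  set L := fderiv ℝ f x₀ with hL
  -- pick u with L u = 1
  obtain ⟨v, hv⟩ : ∃ v, L v ≠ 0 := by
    by_contra h
    push_neg at h
    exact hgrad (ContinuousLinearMap.ext fun w => by simpa using h w)
  set u : EuclideanSpace ℝ (Fin n) := (L v)⁻¹ • v with hu
  have hLu : L u = 1 := by
    simp [hu, map_smul, inv_mul_cancel₀ hv]
  -- remainder and modulus
  set rem : EuclideanSpace ℝ (Fin n) → ℝ := fun y => |f (x₀ + y) - f x₀ - L y| with hrem
  have hrem_cont : Continuous rem := by
    have hfc : Continuous f := hf.continuous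
    exact ((hfc.comp (continuous_const.add continuous_id)).sub continuous_const |>.sub
      L.continuous).abs
  set ρ : ℝ → ℝ := fun t => sSup (rem '' Metric.closedBall 0 t) with hρ
  have hbdd : ∀ t : ℝ, BddAbove (rem '' Metric.closedBall 0 t) := fun t =>
    (isCompact_closedBall (0 : EuclideanSpace ℝ (Fin n)) t).bddAbove_image
      hrem_cont.continuousOn
  have hρ_ge : ∀ t : ℝ, ∀ y, ‖y‖ ≤ t → |f (x₀ + y) - f x₀ - L y| ≤ ρ t := by
    intro t y hy
    exact le_csSup (hbdd t) ⟨y, by simpa [Metric.mem_closedBall, dist_eq_norm] using hy, rfl⟩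
  have hρ_nonneg : ∀ t : ℝ, 0 ≤ t → 0 ≤ ρ t := by
    intro t ht
    have := hρ_ge t 0 (by simpa using ht)
    simpa using this
  -- smallness of ρ
  have hderiv : HasFDerivAt f L x₀ := (hf.differentiable one_ne_zero x₀).hasFDerivAt
  have hlo := hderiv.isLittleO
  have hρ_small : ∀ ε > (0 : ℝ), ∃ δ > (0 : ℝ), ∀ t, 0 ≤ t → t ≤ δ → ρ t ≤ ε * t := by
    intro ε hε
    have h1 := (isLittleO_iff.mp hlo) hε
    rw [Metric.eventually_nhds_iff] at h1
    obtain ⟨δ, hδ, h2⟩ := h1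
    refine ⟨δ / 2, by linarith, fun t ht htδ => ?_⟩
    apply csSup_le (Set.Nonempty.image rem ⟨0, by simpa using ht⟩)
    rintro b ⟨y, hy, rfl⟩
    rw [Metric.mem_closedBall, dist_zero_right] at hy
    have hx : dist (x₀ + y) x₀ < δ := by
      rw [dist_eq_norm]
      simpa using lt_of_le_of_lt (le_trans hy htδ) (by linarith)
    have := h2 hx
    simp only [add_sub_cancel_left] at this
    calc rem y ≤ ε * ‖y‖ := by simpa [hrem] using this
      _ ≤ ε * t := by nlinarith
  -- the tent map
  set r : EuclideanSpace ℝ (Fin n) → EuclideanSpace ℝ (Fin n) :=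
    fun x => x - ρ (2 * ‖x - x₀‖) • u with hr
  have hnorm : ∀ x, ‖r x - x‖ = ρ (2 * ‖x - x₀‖) * ‖u‖ := by
    intro x
    have h0 : 0 ≤ ρ (2 * ‖x - x₀‖) := hρ_nonneg _ (by positivity)
    simp [hr, norm_smul, abs_of_nonneg h0]
  refine ⟨r, ?_, ?_⟩
  · -- little-o claim
    rw [isLittleO_iff]
    intro c hc
    obtain ⟨δ, hδ, hδ2⟩ := hρ_small (c / (2 * (‖u‖ + 1))) (by positivity)
    rw [Metric.eventually_nhds_iff]
    refine ⟨δ / 2, by linarith, fun x hx => ?_⟩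
    rw [dist_eq_norm] at hx
    have ht : (0:ℝ) ≤ 2 * ‖x - x₀‖ := by positivity
    have h1 : ρ (2 * ‖x - x₀‖) ≤ c / (2 * (‖u‖ + 1)) * (2 * ‖x - x₀‖) :=
      hδ2 _ ht (by linarith)
    have hun : (0:ℝ) ≤ ‖u‖ := norm_nonneg u
    rw [hnorm x]
    have h2 : ρ (2 * ‖x - x₀‖) * ‖u‖ ≤ c / (2 * (‖u‖ + 1)) * (2 * ‖x - x₀‖) * ‖u‖ :=
      mul_le_mul_of_nonneg_right h1 hun
    have h3 : c / (2 * (‖u‖ + 1)) * (2 * ‖x - x₀‖) * ‖u‖ ≤ c * ‖x - x₀‖ := by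
      rw [div_mul_eq_mul_div, div_mul_eq_mul_div, div_le_iff₀ (by positivity)]
      nlinarith [norm_nonneg (x - x₀)]
    linarith
  · -- the inclusion
    obtain ⟨δ, hδ, hδ2⟩ := hρ_small (1 / (2 * (‖u‖ + 1))) (by positivity)
    refine ⟨δ / 2, by linarith, fun x hQ hx => ?_⟩
    set t := ‖x - x₀‖ with hts
    have ht0 : 0 ≤ t := norm_nonneg _
    have hρt : ρ (2 * t) ≤ 1 / (2 * (‖u‖ + 1)) * (2 * t) := hδ2 _ (by positivity) (by linarith)
    have hun : (0:ℝ) ≤ ‖u‖ := norm_nonneg u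
    have hsmall : ρ (2 * t) * ‖u‖ ≤ t := by
      have : ρ (2 * t) * ‖u‖ ≤ 1 / (2 * (‖u‖ + 1)) * (2 * t) * ‖u‖ :=
        mul_le_mul_of_nonneg_right hρt hun
      have h3 : 1 / (2 * (‖u‖ + 1)) * (2 * t) * ‖u‖ ≤ t := by
        rw [div_mul_eq_mul_div, div_mul_eq_mul_div, div_le_iff₀ (by positivity)]
        nlinarith
      linarith
    -- r x - x₀ is in ball of radius 2t
    have hrx : ‖r x - x₀‖ ≤ 2 * t := by
      have : r x - x₀ = (x - x₀) - ρ (2 * t) • u := by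
        simp [hr, hts]; abel
      rw [this]
      calc ‖(x - x₀) - ρ (2 * t) • u‖ ≤ ‖x - x₀‖ + ‖ρ (2 * t) • u‖ := norm_sub_le _ _
        _ ≤ t + ρ (2 * t) * ‖u‖ := by
            rw [norm_smul, Real.norm_eq_abs, abs_of_nonneg (hρ_nonneg _ (by positivity))]
        _ ≤ 2 * t := by linarith
    have hb : |f (x₀ + (r x - x₀)) - f x₀ - L (r x - x₀)| ≤ ρ (2 * t) := hρ_ge (2 * t) _ hrx
    have hx0 : x₀ + (r x - x₀) = r x := add_sub_cancel x₀ (r x)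
    rw [hx0] at hb
    have hLrx : L (r x - x₀) = L (x - x₀) - ρ (2 * t) := by
      have : r x - x₀ = (x - x₀) - ρ (2 * t) • u := by simp [hr, hts]; abel
      rw [this, map_sub, map_smul, hLu]
      simp
    have habs := abs_le.mp hb
    have := habs.2
    rw [hLrx] at this
    linarith [hQ]
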